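/- arXiv:0910.2557 — 3 statements merged into one kernel-verified Lean document; each statement's English description precedes it below -/
import Mathlib

section
/- Under the setup, y₁ = y₂. (In other words, two elements y₁, y₂ of A that are roots of 1 + y + y² + y³ + y⁴, congruent to 1 modulo the maximal ideal, and whose associated lifts σ₁ : t ↦ t/√(t² + y₁) and σ₂ : t ↦ t/√(t² + y₂) are conjugate by a substitution automorphism g ≡ t mod m of A⟦t⟧, must coincide.) -/
open PowerSeries

/-- Substitution (composition) of formal power series: `pscomp f g` is `f ∘ g`,
i.e. the series `∑ₖ fₖ gᵏ`, whose `n`-th coefficient is the (finitely supported,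
when the constant coefficient of `g` is nilpotent) sum `∑ᶠ k, fₖ · (coeff n gᵏ)`. -/
noncomputable def pscomp {A : Type*} [CommRing A] (f g : PowerSeries A) : PowerSeries A :=
  PowerSeries.mk fun n => ∑ᶠ k : ℕ, (coeff k f) * (coeff n (g ^ k))


section Pev
open Finset

variable {A : Type*} {T : Type*} [CommRing A] [CommRing T]

noncomputable def pev (ψ : A →+* T) (b : T) (f : PowerSeries A) : T :=
  ∑ᶠ n : ℕ, ψ (coeff n f) * b ^ n

variable {ψ : A →+* T} {b e : T} {N : ℕ}

lemma pev_eq_sum (hb : b ^ N = 0) (f : PowerSeries A) :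
    pev ψ b f = ∑ n ∈ Finset.range N, ψ (coeff n f) * b ^ n := by
  apply finsum_eq_sum_of_support_subset
  intro n hn
  simp only [Function.mem_support] at hn
  by_contra h
  simp only [Finset.coe_range, Set.mem_Iio, not_lt] at h
  exact hn (by rw [pow_eq_zero_of_le h hb, mul_zero])

lemma pev_eq_eval₂ (hb : b ^ N = 0) (f : PowerSeries A) :
    pev ψ b f = (trunc N f).eval₂ ψ b := by
  rw [pev_eq_sum hb, eval₂_trunc_eq_sum_range]

lemma pev_add (hb : IsNilpotent b) (f g : PowerSeries A) :
    pev ψ b (f + g) = pev ψ b f + pev ψ b g := by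
  obtain ⟨N, hN⟩ := hb
  rw [pev_eq_sum hN, pev_eq_sum hN f, pev_eq_sum hN g, ← Finset.sum_add_distrib]
  refine Finset.sum_congr rfl fun n _ => ?_
  simp only [map_add, add_mul]

lemma pev_one (hb : IsNilpotent b) : pev ψ b (1 : PowerSeries A) = 1 := by
  obtain ⟨N, hN⟩ := hb
  have hN1 : b ^ (N + 1) = 0 := pow_eq_zero_of_le (Nat.le_succ N) hN
  rw [pev_eq_sum hN1, Finset.sum_range_succ']
  simp [coeff_one]

lemma pev_C (hb : IsNilpotent b) (a : A) : pev ψ b (C a) = ψ a := by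
  obtain ⟨N, hN⟩ := hb
  have hN1 : b ^ (N + 1) = 0 := pow_eq_zero_of_le (Nat.le_succ N) hN
  rw [pev_eq_sum hN1, Finset.sum_range_succ']
  simp [coeff_C]

lemma pev_X (hb : IsNilpotent b) : pev ψ b (X : PowerSeries A) = b := by
  obtain ⟨N, hN⟩ := hb
  have hN2 : b ^ (N + 2) = 0 := pow_eq_zero_of_le (by omega) hN
  rw [pev_eq_sum hN2]
  have : ∀ n ∈ Finset.range (N + 2), ψ (coeff n (X : PowerSeries A)) * b ^ n
      = if n = 1 then b else 0 := by
    intro n _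
    rcases eq_or_ne n 1 with h | h
    · simp [h, coeff_X]
    · simp [coeff_X, h]
  rw [Finset.sum_congr rfl this, Finset.sum_ite_eq' (Finset.range (N+2)) 1 (fun _ => b)]
  simp

lemma pev_mul (hb : IsNilpotent b) (f g : PowerSeries A) :
    pev ψ b (f * g) = pev ψ b f * pev ψ b g := by
  obtain ⟨N, hN⟩ := hb
  have h2 : b ^ (N + N) = 0 := pow_eq_zero_of_le (Nat.le_add_right N N) hN
  rw [pev_eq_eval₂ h2, pev_eq_eval₂ h2 f, pev_eq_eval₂ h2 g, ← Polynomial.eval₂_mul]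
  have hdvd : (Polynomial.X : Polynomial A) ^ (N + N) ∣
      trunc (N+N) f * trunc (N+N) g - trunc (N+N) (f * g) := by
    rw [Polynomial.X_pow_dvd_iff]
    intro d hd
    rw [Polynomial.coeff_sub, coeff_trunc, if_pos hd]
    rw [← Polynomial.coeff_coe, Polynomial.coe_mul,
      ← coeff_mul_eq_coeff_trunc_mul_trunc f g hd, sub_self]
  obtain ⟨Q, hQ⟩ := hdvd
  have : trunc (N+N) (f * g) = trunc (N+N) f * trunc (N+N) g - Polynomial.X ^ (N+N) * Q := by
    rw [← hQ]; ring
  rw [this]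
  simp only [Polynomial.eval₂_sub, Polynomial.eval₂_mul, Polynomial.eval₂_X_pow, h2,
    zero_mul, sub_zero]

lemma pev_pow (hb : IsNilpotent b) (f : PowerSeries A) (k : ℕ) :
    pev ψ b (f ^ k) = (pev ψ b f) ^ k := by
  induction k with
  | zero => simpa using pev_one hb
  | succ k ih => rw [pow_succ, pev_mul hb, ih, pow_succ]

lemma pev_neg (hb : IsNilpotent b) (f : PowerSeries A) :
    pev ψ b (-f) = -pev ψ b f := by
  obtain ⟨N, hN⟩ := hb
  rw [pev_eq_sum hN, pev_eq_sum hN, ← Finset.sum_neg_distrib]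
  refine Finset.sum_congr rfl fun n _ => ?_
  simp only [map_neg, neg_mul]

lemma pev_sub (hb : IsNilpotent b) (f g : PowerSeries A) :
    pev ψ b (f - g) = pev ψ b f - pev ψ b g := by
  rw [sub_eq_add_neg, pev_add hb, pev_neg hb, sub_eq_add_neg]

lemma pev_mem (hb : IsNilpotent b) {I : Ideal A} {f : PowerSeries A}
    (h : ∀ n, coeff n f ∈ I) : pev ψ b f ∈ I.map ψ := by
  obtain ⟨N, hN⟩ := hb
  rw [pev_eq_sum hN]
  exact Ideal.sum_mem _ fun n _ => Ideal.mul_mem_right _ _ (Ideal.mem_map_of_mem ψ (h n))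

lemma pev_sub_const_nilpotent (hb : IsNilpotent b) (f : PowerSeries A) :
    pev ψ b f - ψ (coeff 0 f) ∈ nilradical T := by
  obtain ⟨N, hN⟩ := hb
  have hN1 : b ^ (N + 1) = 0 := pow_eq_zero_of_le (Nat.le_succ N) hN
  rw [pev_eq_sum hN1, Finset.sum_range_succ']
  simp only [pow_zero, mul_one, add_sub_cancel_right]
  refine Ideal.sum_mem _ fun i _ => ?_
  have hbmem : b ∈ nilradical T := mem_nilradical.mpr ⟨N, hN⟩
  rw [pow_succ]
  exact Ideal.mul_mem_left _ _ (Ideal.mul_mem_left _ _ hbmem)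

lemma pev_isNilpotent (hb : IsNilpotent b) {f : PowerSeries A}
    (h0 : IsNilpotent (coeff 0 f)) : IsNilpotent (pev ψ b f) := by
  have h1 : IsNilpotent (pev ψ b f - ψ (coeff 0 f)) :=
    mem_nilradical.mp (pev_sub_const_nilpotent hb f)
  have h2 : IsNilpotent (ψ (coeff 0 f)) := h0.map ψ
  have := (Commute.all _ (ψ (coeff 0 f))).isNilpotent_add h1 h2
  simpa using this

lemma pev_comp_ringHom {D : Type*} [CommRing D] (χ : T →+* D) (hb : IsNilpotent b)
    (f : PowerSeries A) : χ (pev ψ b f) = pev (χ.comp ψ) (χ b) f := by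
  obtain ⟨N, hN⟩ := hb
  have hN' : (χ b) ^ N = 0 := by rw [← map_pow, hN, map_zero]
  rw [pev_eq_sum hN, map_sum, pev_eq_sum hN']
  refine Finset.sum_congr rfl fun n _ => ?_
  rw [map_mul, map_pow, RingHom.comp_apply]

end Pev

noncomputable def psD {A : Type*} [CommRing A] (f : PowerSeries A) : PowerSeries A :=
  PowerSeries.mk fun n => ((n : A) + 1) * coeff (n + 1) f

section Pev2
open Finset

variable {A : Type*} {T : Type*} [CommRing A] [CommRing T]
variable {ψ : A →+* T} {b e : T} {N : ℕ}

lemma pow_add_sq_zero (b e : T) (he : e * e = 0) (n : ℕ) :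
    (b + e) ^ (n + 1) = b ^ (n + 1) + ((n : T) + 1) * b ^ n * e := by
  induction n with
  | zero => push_cast; ring
  | succ n ih =>
    have : (b + e) ^ (n + 1 + 1) = (b + e) ^ (n + 1) * (b + e) := by ring
    rw [this, ih]
    push_cast
    linear_combination (((n : T) + 1) * b ^ n) * he

lemma pev_taylor (hb : IsNilpotent b) (he : e * e = 0) (f : PowerSeries A) :
    pev ψ (b + e) f = pev ψ b f + e * pev ψ b (psD f) := by
  obtain ⟨N, hN⟩ := hb
  have hN1 : b ^ (N + 1) = 0 := pow_eq_zero_of_le (Nat.le_succ N) hN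
  have hbe : (b + e) ^ (N + 1) = 0 := by
    rw [pow_add_sq_zero b e he, hN1, hN]; ring
  rw [pev_eq_sum hbe, pev_eq_sum hN1 f, pev_eq_sum hN (psD f),
    Finset.sum_range_succ', Finset.sum_range_succ']
  have hterm : ∀ i, ψ (coeff (i + 1) f) * (b + e) ^ (i + 1)
      = ψ (coeff (i + 1) f) * b ^ (i + 1)
        + (ψ (coeff i (psD f)) * b ^ i) * e := by
    intro i
    rw [pow_add_sq_zero b e he]
    have hco : coeff i (psD f) = ((i : A) + 1) * coeff (i + 1) f := by
      simp [psD, coeff_mk]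
    rw [hco, map_mul]
    have : ψ ((i : A) + 1) = ((i : T) + 1) := by
      rw [map_add, map_natCast, map_one]
    rw [this]
    ring
  rw [Finset.sum_congr rfl fun i _ => hterm i, Finset.sum_add_distrib]
  simp only [pow_zero, mul_one]
  have : ∑ x ∈ Finset.range N, ψ (coeff x (psD f)) * b ^ x * e
      = e * ∑ i ∈ Finset.range N, ψ (coeff i (psD f)) * b ^ i := by
    rw [Finset.mul_sum]
    exact Finset.sum_congr rfl fun i _ => by ring
  rw [this]
  ring
end Pev2

section Pev3
open Finset

variable {A : Type*} {T : Type*} [CommRing A] [CommRing T]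
variable {ψ : A →+* T} {b : T}

lemma coeff_pow_eq_zero {g : PowerSeries A} {M : ℕ}
    (hM : (constantCoeff g) ^ M = 0) {n k : ℕ} (hk : n + M ≤ k) :
    coeff n (g ^ k) = 0 := by
  set a : PowerSeries A := C (constantCoeff g) with ha
  set Y : PowerSeries A := g - a with hY
  have hXY : (X : PowerSeries A) ∣ Y := by
    rw [PowerSeries.X_dvd_iff]
    simp [hY, ha]
  have hg : g = Y + a := by rw [hY]; ring
  rw [hg, add_pow, map_sum]
  refine Finset.sum_eq_zero fun j hj => ?_
  by_cases hjn : j ≤ n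
  · have hc : (constantCoeff g) ^ (k - j) = 0 :=
      pow_eq_zero_of_le (by omega) hM
    have : a ^ (k - j) = 0 := by
      rw [ha, ← map_pow, hc, map_zero]
    rw [this]
    simp
  · obtain ⟨Z, hZ⟩ : (X : PowerSeries A) ^ j ∣ Y ^ j := pow_dvd_pow_of_dvd hXY j
    rw [hZ, mul_assoc, mul_assoc, PowerSeries.coeff_X_pow_mul']
    rw [if_neg (by omega)]

lemma pev_pscomp (hb : IsNilpotent b) {f g : PowerSeries A}
    (h0 : IsNilpotent (constantCoeff g)) :
    pev ψ b (pscomp f g) = pev ψ (pev ψ b g) f := by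
  obtain ⟨M, hM⟩ := h0
  obtain ⟨N, hN⟩ := hb
  have hbnil : IsNilpotent b := ⟨N, hN⟩
  have hcnil : IsNilpotent (pev ψ b g) :=
    pev_isNilpotent hbnil (by rw [coeff_zero_eq_constantCoeff]; exact ⟨M, hM⟩)
  obtain ⟨K, hK⟩ := hcnil
  set L := N + M + K with hL
  have hcL : (pev ψ b g) ^ L = 0 := pow_eq_zero_of_le (by omega) hK
  rw [pev_eq_sum hN (pscomp f g), pev_eq_sum hcL f]
  have hco : ∀ n, n < N → coeff n (pscomp f g)
      = ∑ k ∈ Finset.range L, coeff k f * coeff n (g ^ k) := by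
    intro n hn
    rw [pscomp, coeff_mk]
    apply finsum_eq_sum_of_support_subset
    intro k hk
    simp only [Function.mem_support] at hk
    by_contra h
    simp only [Finset.coe_range, Set.mem_Iio, not_lt] at h
    exact hk (by rw [coeff_pow_eq_zero hM (by omega), mul_zero])
  calc ∑ n ∈ Finset.range N, ψ (coeff n (pscomp f g)) * b ^ n
      = ∑ n ∈ Finset.range N, ∑ k ∈ Finset.range L,
          ψ (coeff k f) * (ψ (coeff n (g ^ k)) * b ^ n) := by
        refine Finset.sum_congr rfl fun n hn => ?_
        rw [hco n (Finset.mem_range.mp hn), map_sum, Finset.sum_mul]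
        exact Finset.sum_congr rfl fun k _ => by rw [map_mul]; ring
    _ = ∑ k ∈ Finset.range L, ψ (coeff k f)
          * ∑ n ∈ Finset.range N, ψ (coeff n (g ^ k)) * b ^ n := by
        rw [Finset.sum_comm]
        exact Finset.sum_congr rfl fun k _ => by rw [Finset.mul_sum]
    _ = ∑ k ∈ Finset.range L, ψ (coeff k f) * (pev ψ b g) ^ k := by
        refine Finset.sum_congr rfl fun k _ => ?_
        rw [← pev_eq_sum hN (g ^ k), pev_pow hbnil]

end Pev3

section Quad

variable {R : Type*} [CommRing R] [Nontrivial R] (c : R)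

omit [Nontrivial R] in
lemma quad_monic : (Polynomial.X ^ 2 + Polynomial.C c).Monic :=
  Polynomial.monic_X_pow_add_C c (by norm_num)

noncomputable def quadBasis : Module.Basis (Fin 2) R (AdjoinRoot (Polynomial.X ^ 2 + Polynomial.C c)) :=
  ((AdjoinRoot.powerBasis' (quad_monic c)).basis).reindex
    (finCongr (by rw [AdjoinRoot.powerBasis'_dim, Polynomial.natDegree_X_pow_add_C]))

lemma quadBasis_apply (i : Fin 2) :
    quadBasis c i = AdjoinRoot.root (Polynomial.X ^ 2 + Polynomial.C c) ^ (i : ℕ) := by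
  simp only [quadBasis, Module.Basis.reindex_apply, PowerBasis.basis_eq_pow,
    AdjoinRoot.powerBasis'_gen]
  congr 1

lemma quad_decomp (z : AdjoinRoot (Polynomial.X ^ 2 + Polynomial.C c)) :
    z = algebraMap R _ ((quadBasis c).repr z 0)
      + algebraMap R _ ((quadBasis c).repr z 1) * AdjoinRoot.root _ := by
  conv_lhs => rw [← (quadBasis c).sum_repr z]
  rw [Fin.sum_univ_two, quadBasis_apply, quadBasis_apply]
  simp [Algebra.smul_def]

lemma quad_repr_apply (a b : R) (i : Fin 2) :
    (quadBasis c).repr (algebraMap R _ a + algebraMap R _ b * AdjoinRoot.root _) i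
      = if i = 0 then a else b := by
  have h : algebraMap R (AdjoinRoot (Polynomial.X ^ 2 + Polynomial.C c)) a
        + algebraMap R _ b * AdjoinRoot.root _
      = a • quadBasis c 0 + b • quadBasis c 1 := by
    rw [quadBasis_apply, quadBasis_apply]
    simp [Algebra.smul_def]
  rw [h, map_add, map_smul, map_smul, Module.Basis.repr_self, Module.Basis.repr_self]
  fin_cases i <;> simp [Finsupp.single_apply]

lemma quad_inj {a b a' b' : R}
    (h : algebraMap R (AdjoinRoot (Polynomial.X ^ 2 + Polynomial.C c)) a
          + algebraMap R _ b * AdjoinRoot.root _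
        = algebraMap R _ a' + algebraMap R _ b' * AdjoinRoot.root _) :
    a = a' ∧ b = b' := by
  have h0 := congrArg (fun z => (quadBasis c).repr z 0) h
  have h1 := congrArg (fun z => (quadBasis c).repr z 1) h
  simp only [quad_repr_apply, if_pos, if_neg] at h0 h1
  refine ⟨by simpa using h0, by simpa using h1⟩

lemma quad_nontrivial : Nontrivial (AdjoinRoot (Polynomial.X ^ 2 + Polynomial.C c)) := by
  refine ⟨1, 0, fun h => ?_⟩
  have h' : algebraMap R (AdjoinRoot (Polynomial.X ^ 2 + Polynomial.C c)) 1
        + algebraMap R _ 0 * AdjoinRoot.root _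
      = algebraMap R _ 0 + algebraMap R _ 0 * AdjoinRoot.root _ := by
    simpa using h
  exact one_ne_zero ((quad_inj c h').1)

omit [Nontrivial R] in
lemma quad_root_sq :
    (AdjoinRoot.root (Polynomial.X ^ 2 + Polynomial.C c)) ^ 2 = algebraMap R _ (-c) := by
  have h := AdjoinRoot.eval₂_root (Polynomial.X ^ 2 + Polynomial.C c)
  simp only [Polynomial.eval₂_add, Polynomial.eval₂_pow, Polynomial.eval₂_X,
    Polynomial.eval₂_C] at h
  rw [AdjoinRoot.algebraMap_eq, map_neg]
  linear_combination h

omit [Nontrivial R] in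
lemma quad_root_nilpotent (hc : IsNilpotent c) :
    IsNilpotent (AdjoinRoot.root (Polynomial.X ^ 2 + Polynomial.C c)) := by
  obtain ⟨M, hM⟩ := hc
  refine ⟨2 * M, ?_⟩
  rw [pow_mul, quad_root_sq, ← map_pow]
  have : (-c) ^ M = 0 := by rw [neg_pow, hM, mul_zero]
  rw [this, map_zero]

lemma quad_coord_mem {I : Ideal R} {z : AdjoinRoot (Polynomial.X ^ 2 + Polynomial.C c)}
    (hz : z ∈ I.map (algebraMap R (AdjoinRoot (Polynomial.X ^ 2 + Polynomial.C c)))) (i : Fin 2) :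
    (quadBasis c).repr z i ∈ I := by
  have haux : ∀ z : AdjoinRoot (Polynomial.X ^ 2 + Polynomial.C c),
      (∀ j : Fin 2, (quadBasis c).repr z j ∈ I) →
      ∀ j : Fin 2, (quadBasis c).repr (AdjoinRoot.root _ * z) j ∈ I := by
    intro z hzI j
    set z₀ := (quadBasis c).repr z 0
    set z₁ := (quadBasis c).repr z 1
    have hdz := quad_decomp c z
    have : AdjoinRoot.root (Polynomial.X ^ 2 + Polynomial.C c) * z
        = algebraMap R _ (-c * z₁) + algebraMap R _ z₀ * AdjoinRoot.root _ := by
      rw [hdz]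
      rw [map_mul]
      linear_combination algebraMap R (AdjoinRoot (Polynomial.X ^ 2 + Polynomial.C c)) z₁ *
        quad_root_sq c
    rw [this, quad_repr_apply]
    split
    · exact I.mul_mem_left _ (hzI 1)
    · exact hzI 0
  have hspan : z ∈ Submodule.span (AdjoinRoot (Polynomial.X ^ 2 + Polynomial.C c))
      ((algebraMap R (AdjoinRoot (Polynomial.X ^ 2 + Polynomial.C c))) '' I) := hz
  refine Submodule.span_induction
    (p := fun z _ => ∀ j : Fin 2, (quadBasis c).repr z j ∈ I)
    ?_ ?_ ?_ ?_ hspan i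
  · rintro _ ⟨a, haI, rfl⟩ j
    have : algebraMap R (AdjoinRoot (Polynomial.X ^ 2 + Polynomial.C c)) a
        = algebraMap R _ a + algebraMap R _ 0 * AdjoinRoot.root _ := by simp
    rw [this, quad_repr_apply]
    split
    · exact haI
    · exact I.zero_mem
  · intro j; simp
  · intro u v _ _ hu hv j
    rw [map_add]
    exact I.add_mem (hu j) (hv j)
  · intro r u _ hu j
    have hdr := quad_decomp c r
    set r₀ := (quadBasis c).repr r 0
    set r₁ := (quadBasis c).repr r 1
    have : r • u = r₀ • u + r₁ • (AdjoinRoot.root _ * u) := by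
      rw [smul_eq_mul, hdr]
      simp only [Algebra.smul_def]
      ring
    rw [this, map_add, map_smul, map_smul]
    simp only [Finsupp.coe_add, Finsupp.coe_smul, Pi.add_apply, Pi.smul_apply,
      smul_eq_mul]
    exact I.add_mem (I.mul_mem_left _ (hu j)) (I.mul_mem_left _ (haux u hu j))

end Quad

lemma mem_map_isNilpotent {A B : Type*} [CommRing A] [CommRing B] (ψ : A →+* B)
    {I : Ideal A} {M : ℕ} (hM : I ^ M = 0) {w : B} (hw : w ∈ I.map ψ) :
    IsNilpotent w := by
  refine ⟨M, ?_⟩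
  have h1 : w ^ M ∈ (I.map ψ) ^ M := Ideal.pow_mem_pow hw M
  rw [← Ideal.map_pow, hM] at h1
  simpa using h1

lemma key_lemma {A : Type*} [CommRing A] (mA : Ideal A) {M : ℕ} (hM : mA ^ M = 0)
    (hu : ∀ a : A, a ∉ mA → IsUnit a) (h2 : (2:A) ∉ mA) (h3 : (3:A) ∉ mA)
    (y₁ y₂ : A) (hy₁m : y₁ - 1 ∈ mA) (hy₂m : y₂ - 1 ∈ mA)
    (u₁ u₂ σ₁ σ₂ g : PowerSeries A)
    (hu₁ : u₁ ^ 2 = X ^ 2 + C y₁) (hu₂ : u₂ ^ 2 = X ^ 2 + C y₂)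
    (hu₂0 : constantCoeff u₂ - 1 ∈ mA)
    (hσ₁ : σ₁ * u₁ = X) (hσ₂ : σ₂ * u₂ = X)
    (hg0 : coeff 0 g ∈ mA) (hg1 : coeff 1 g - 1 ∈ mA)
    (hgn : ∀ n, 2 ≤ n → coeff n g ∈ mA)
    (hconj : pscomp σ₁ g = pscomp g σ₂)
    {B : Type*} [CommRing B] (φ : A →+* B) (x : B)
    (hx2 : x * x = 1 - φ y₂) (hxnil : IsNilpotent x)
    (hinjB : ∀ a b a' b' : A, φ a + φ b * x = φ a' + φ b' * x → a = a' ∧ b = b')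
    (hmemdec : ∀ z : B, z ∈ mA.map φ → ∃ t₀ t₁ : A, z = φ t₀ + φ t₁ * x ∧ t₀ ∈ mA ∧ t₁ ∈ mA)
    {Cr : Type*} [CommRing Cr] (ι : B →+* Cr) (ε : Cr)
    (hεε : ε * ε = 0)
    (hinjC : ∀ a b a' b' : B, ι a + ι b * ε = ι a' + ι b' * ε → a = a' ∧ b = b')
    (hdecC : ∀ z : Cr, ∃ w₀ w₁ : B, z = ι w₀ + ι w₁ * ε) :
    y₁ = y₂ := by
  -- basic nilpotency and unit facts
  have hnilA : ∀ a ∈ mA, IsNilpotent a := by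
    intro a ha
    refine ⟨M, ?_⟩
    have h1 : a ^ M ∈ mA ^ M := Ideal.pow_mem_pow ha M
    rw [hM] at h1
    simpa using h1
  have htwoA : IsUnit (2:A) := hu 2 h2
  have hεnil : IsNilpotent ε := ⟨2, by rw [pow_two, hεε]⟩
  have hιx : IsNilpotent (ι x) := hxnil.map ι
  have hznil : IsNilpotent (ι x + ε) := (Commute.all _ _).isNilpotent_add hιx hεnil
  have hg0nil : IsNilpotent (constantCoeff g) := by
    rw [← coeff_zero_eq_constantCoeff]
    exact hnilA _ hg0
  -- constant coefficient of σ₂ is 0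
  have hcu₂ : IsUnit (constantCoeff u₂) := by
    have h1 : IsNilpotent (constantCoeff u₂ - 1) := hnilA _ hu₂0
    have := h1.isUnit_add_one
    simpa using this
  have hσ₂0 : constantCoeff σ₂ = 0 := by
    have h1 := congrArg (constantCoeff) hσ₂
    rw [map_mul, constantCoeff_X] at h1
    have h0 : constantCoeff u₂ * constantCoeff σ₂ = constantCoeff u₂ * 0 := by
      rw [mul_zero]; rw [mul_comm]; exact h1
    exact hcu₂.mul_left_cancel h0
  have hσ₂0nil : IsNilpotent (constantCoeff σ₂) := by rw [hσ₂0]; exact IsNilpotent.zero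
  -- base-change of the quadratic relation
  have hx2C : ι x * ι x = 1 - ι (φ y₂) := by
    rw [← map_mul, hx2, map_sub, map_one]
  -- names
  set Ψ : A →+* Cr := ι.comp φ with hΨdef
  set z : Cr := ι x + ε with hzdef
  set p : B := pev φ x g with hpdef
  set δ : B := pev φ x (psD g) with hδdef
  set U : Cr := pev Ψ z u₂ with hUdef
  set S : Cr := pev Ψ z σ₂ with hSdef
  set G : Cr := pev Ψ z g with hGdef
  -- U computation
  have hU2 : U * U = 1 + 2 * (ι x * ε) := by
    have e1 : pev Ψ z (u₂ ^ 2) = U ^ 2 := pev_pow hznil u₂ 2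
    have e2 : pev Ψ z (X ^ 2 + C y₂) = z ^ 2 + Ψ y₂ := by
      rw [pev_add hznil, pev_pow hznil, pev_X hznil, pev_C hznil]
    have e3 : U ^ 2 = z ^ 2 + Ψ y₂ := by rw [← e1, hu₂, e2]
    have hΨ : Ψ y₂ = ι (φ y₂) := rfl
    rw [hΨ] at e3
    rw [hzdef] at e3
    linear_combination e3 + hεε + hx2C
  have hV2 : (1 + ι x * ε) * (1 + ι x * ε) = 1 + 2 * (ι x * ε) := by
    linear_combination (ι x * ι x) * hεε
  have hUnil : IsNilpotent (U - 1) := by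
    have n1 : IsNilpotent (U - Ψ (coeff 0 u₂)) :=
      mem_nilradical.mp (pev_sub_const_nilpotent hznil u₂)
    have n2 : IsNilpotent (Ψ (coeff 0 u₂) - 1) := by
      have h1 : IsNilpotent (coeff 0 u₂ - 1) := by
        rw [coeff_zero_eq_constantCoeff]; exact hnilA _ hu₂0
      have := h1.map Ψ
      rwa [map_sub, map_one] at this
    have := (Commute.all _ _).isNilpotent_add n1 n2
    simpa using this
  have htwoC : IsUnit (2 : Cr) := by
    have := htwoA.map Ψ
    rwa [map_ofNat] at this
  have hsumu : IsUnit (U + (1 + ι x * ε)) := by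
    have hn : IsNilpotent ((U - 1) + ι x * ε) := by
      refine (Commute.all _ _).isNilpotent_add hUnil ⟨2, ?_⟩
      rw [mul_pow, pow_two ε, hεε, mul_zero]
    have h := hn.isUnit_add_right_of_commute htwoC (Commute.all _ _)
    have heq : (U - 1 + ι x * ε) + 2 = U + (1 + ι x * ε) := by ring
    rwa [heq] at h
  have hUV : U = 1 + ι x * ε := by
    have hd : (U + (1 + ι x * ε)) * U = (U + (1 + ι x * ε)) * (1 + ι x * ε) := by
      linear_combination hU2 - hV2
    exact hsumu.mul_left_cancel hd
  have hUu : IsUnit U := by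
    rw [hUV]
    refine IsNilpotent.isUnit_one_add ⟨2, ?_⟩
    rw [mul_pow, pow_two ε, hεε, mul_zero]
  -- S computation
  have hSU : S * U = z := by
    have e1 : pev Ψ z (σ₂ * u₂) = S * U := pev_mul hznil σ₂ u₂
    have e2 : pev Ψ z (X : PowerSeries A) = z := pev_X hznil
    rw [← e1, hσ₂, e2]
  have hS : S = ι x + ι (φ y₂) * ε := by
    have hcand : U * (ι x + ι (φ y₂) * ε) = U * S := by
      linear_combination (ι x + ι (φ y₂) * ε) * hUV - hSU - hzdef + ε * hx2C
        + (ι (φ y₂) * ι x) * hεε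
    exact (hUu.mul_left_cancel hcand).symm
  -- G and T
  have hpi : pev Ψ (ι x) g = ι p := by
    rw [hpdef, hΨdef]
    exact (pev_comp_ringHom ι hxnil g).symm
  have hδi : pev Ψ (ι x) (psD g) = ι δ := by
    rw [hδdef, hΨdef]
    exact (pev_comp_ringHom ι hxnil (psD g)).symm
  have hG : G = ι p + ε * ι δ := by
    rw [hGdef, hzdef, pev_taylor hιx hεε g, hpi, hδi]
  have hT : pev Ψ S g = ι p + (ι (φ y₂) * ε) * ι δ := by
    rw [hS]
    have he : (ι (φ y₂) * ε) * (ι (φ y₂) * ε) = 0 := by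
      linear_combination (ι (φ y₂) * ι (φ y₂)) * hεε
    rw [pev_taylor hιx he g, hpi, hδi]
  -- conjugation
  have hconj' : pev Ψ G σ₁ = pev Ψ S g := by
    have c1 : pev Ψ z (pscomp σ₁ g) = pev Ψ G σ₁ := by
      rw [hGdef]; exact pev_pscomp hznil hg0nil
    have c2 : pev Ψ z (pscomp g σ₂) = pev Ψ S g := by
      rw [hSdef]; exact pev_pscomp hznil hσ₂0nil
    rw [← c1, ← c2, hconj]
  have hGnil : IsNilpotent G := pev_isNilpotent hznil (by
    rw [coeff_zero_eq_constantCoeff]; exact hg0nil)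
  set W : Cr := pev Ψ G u₁ with hWdef
  have hW2 : W * W = G * G + ι (φ y₁) := by
    have e1 : pev Ψ G (u₁ ^ 2) = W ^ 2 := pev_pow hGnil u₁ 2
    have e2 : pev Ψ G (X ^ 2 + C y₁) = G ^ 2 + Ψ y₁ := by
      rw [pev_add hGnil, pev_pow hGnil, pev_X hGnil, pev_C hGnil]
    have e3 : W ^ 2 = G ^ 2 + Ψ y₁ := by rw [← e1, hu₁, e2]
    have hΨ : Ψ y₁ = ι (φ y₁) := rfl
    rw [hΨ] at e3
    linear_combination e3
  have hTW : pev Ψ S g * W = G := by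
    have e1 : pev Ψ G (σ₁ * u₁) = pev Ψ G σ₁ * W := pev_mul hGnil σ₁ u₁
    have e2 : pev Ψ G (X : PowerSeries A) = G := pev_X hGnil
    rw [← hconj', ← e1, hσ₁, e2]
  -- decompose W
  obtain ⟨w₀, w₁, hWd⟩ := hdecC W
  -- component equations from W² and TW
  have hWsq : W * W = ι (w₀ * w₀) + ι (2 * (w₀ * w₁)) * ε := by
    rw [hWd]
    simp only [map_mul, map_ofNat]
    linear_combination (ι w₁ * ι w₁) * hεε
  have hGsq : G * G = ι (p * p) + ι (2 * (p * δ)) * ε := by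
    rw [hG]
    simp only [map_mul, map_ofNat]
    linear_combination (ι δ * ι δ) * hεε
  have eW2 : ι (w₀ * w₀) + ι (2 * (w₀ * w₁)) * ε
      = ι (p * p + φ y₁) + ι (2 * (p * δ)) * ε := by
    simp only [map_add]
    linear_combination hW2 + hGsq - hWsq
  obtain ⟨hB1, hB2⟩ := hinjC _ _ _ _ eW2
  have eTWexp : pev Ψ S g * W = ι (p * w₀) + ι (p * w₁ + φ y₂ * δ * w₀) * ε := by
    rw [hT, hWd]
    simp only [map_add, map_mul]
    linear_combination (ι (φ y₂) * ι δ * ι w₁) * hεε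
  have eTW : ι (p * w₀) + ι (p * w₁ + φ y₂ * δ * w₀) * ε = ι p + ι δ * ε := by
    rw [← eTWexp, hTW, hG]
    ring
  obtain ⟨h3B, h4B⟩ := hinjC _ _ _ _ eTW
  -- B-level consequences
  have htwoB : IsUnit (2 : B) := by
    have := htwoA.map φ
    rwa [map_ofNat] at this
  have hB2'' : (2:B) * (w₀ * w₁) = 2 * (p * δ) := by linear_combination hB2
  have hB2' : w₀ * w₁ = p * δ := htwoB.mul_left_cancel hB2''
  have hδu : IsUnit δ := by
    have hmem : δ - 1 ∈ mA.map φ := by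
      have hco : ∀ n, coeff n (psD g - 1) ∈ mA := by
        intro n
        rw [map_sub]
        cases n with
        | zero =>
          have : coeff 0 (psD g) = coeff 1 g := by
            simp [psD, coeff_mk]
          rw [this]
          simpa using hg1
        | succ n =>
          have h1 : coeff (n+1) (psD g) = ((n+2 : ℕ) : A) * coeff (n+2) g := by
            simp [psD, coeff_mk]
            ring_nf
          have h0 : coeff (n+1) (1 : PowerSeries A) = 0 := by
            simp [coeff_one]
          rw [h1, h0, sub_zero]
          exact mA.mul_mem_left _ (hgn (n+2) (by omega))
      have hmem0 : pev φ x (psD g - 1) ∈ mA.map φ := pev_mem hxnil hco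
      rwa [pev_sub hxnil, pev_one hxnil, ← hδdef] at hmem0
    have hn : IsNilpotent (δ - 1) := mem_map_isNilpotent φ hM hmem
    have := hn.isUnit_add_one
    simpa using this
  have hw₀val : w₀ = p * p * (1 + φ y₂) + φ y₁ * φ y₂ := by
    have hδw : δ * w₀ = δ * (p * p * (1 + φ y₂) + φ y₁ * φ y₂) := by
      linear_combination (-w₀) * h4B + p * hB2' + (φ y₂ * δ) * hB1
    exact hδu.mul_left_cancel hδw
  -- decompose p
  have hpx : p - x ∈ mA.map φ := by
    have hco : ∀ n, coeff n (g - X) ∈ mA := by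
      intro n
      rw [map_sub]
      match n with
      | 0 => simpa [coeff_X] using hg0
      | 1 => simpa [coeff_X] using hg1
      | (n+2) =>
        have : coeff (n+2) (X : PowerSeries A) = 0 := by
          simp [coeff_X]
        rw [this, sub_zero]
        exact hgn (n+2) (by omega)
    have hmem0 : pev φ x (g - X) ∈ mA.map φ := pev_mem hxnil hco
    rwa [pev_sub hxnil, pev_X hxnil, ← hpdef] at hmem0
  obtain ⟨t₀, t₁, htd, ht₀, ht₁⟩ := hmemdec _ hpx
  set s₀ : A := t₀ with hs₀def
  set s₁ : A := t₁ + 1 with hs₁def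
  have hpd : p = φ s₀ + φ s₁ * x := by
    rw [hs₀def, hs₁def, map_add, map_one]
    have : p = (p - x) + x := by ring
    rw [this, htd]
    ring
  have hs₀m : s₀ ∈ mA := ht₀
  have hs₁u : IsUnit s₁ := by
    have hn : IsNilpotent t₁ := hnilA _ ht₁
    rw [hs₁def]
    exact hn.isUnit_add_one
  -- now everything in coordinates
  have h1y : (1:A) - y₂ ∈ mA := by
    have := mA.neg_mem hy₂m
    simpa using this
  have hpp' : p * p = φ s₀ * φ s₀ + φ s₁ * φ s₁ * (1 - φ y₂) + (2 * (φ s₀ * φ s₁)) * x := by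
    rw [hpd]
    linear_combination (φ s₁ * φ s₁) * hx2
  obtain ⟨v₀, hv₀def⟩ : ∃ v, v = (s₀*s₀ + s₁*s₁*(1-y₂))*(1+y₂) + y₁*y₂ := ⟨_, rfl⟩
  obtain ⟨v₁, hv₁def⟩ : ∃ v, v = 2*(s₀*s₁)*(1+y₂) := ⟨_, rfl⟩
  have hw₀d : w₀ = φ v₀ + φ v₁ * x := by
    rw [hw₀val, hv₀def, hv₁def]
    simp only [map_add, map_mul, map_sub, map_one, map_ofNat]
    linear_combination (1 + φ y₂) * hpp'
  have hw₀sq : w₀ * w₀ = φ v₀ * φ v₀ + φ v₁ * φ v₁ * (1 - φ y₂) + (2 * (φ v₀ * φ v₁)) * x := by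
    rw [hw₀d]
    linear_combination (φ v₁ * φ v₁) * hx2
  have key1 : φ (v₀*v₀ + v₁*v₁*(1-y₂)) + φ (2*(v₀*v₁)) * x
      = φ ((s₀*s₀ + s₁*s₁*(1-y₂)) + y₁) + φ (2*(s₀*s₁)) * x := by
    simp only [map_add, map_mul, map_sub, map_one, map_ofNat]
    linear_combination hB1 + hpp' - hw₀sq
  obtain ⟨hA1, hA2⟩ := hinjB _ _ _ _ key1
  have hpw : p * w₀ = φ (s₀*v₀ + s₁*v₁*(1-y₂)) + φ (s₀*v₁ + s₁*v₀) * x := by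
    rw [hpd, hw₀d]
    simp only [map_add, map_mul, map_sub, map_one]
    linear_combination (φ s₁ * φ v₁) * hx2
  have key3 : φ (s₀*v₀ + s₁*v₁*(1-y₂)) + φ (s₀*v₁ + s₁*v₀) * x = φ s₀ + φ s₁ * x := by
    rw [← hpw, h3B, hpd]
  obtain ⟨hC1, hC2⟩ := hinjB _ _ _ _ key3
  have hA2' : v₀ * v₁ = s₀ * s₁ := by
    refine htwoA.mul_left_cancel ?_
    linear_combination hA2
  have hFeq : (s₀*s₁) * (2*(v₀*(1+y₂)) - 1) = 0 := by
    rw [hv₁def] at hA2'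
    linear_combination hA2'
  have hv₀m : v₀ - 1 ∈ mA := by
    rw [hv₀def]
    have heq : ((s₀*s₀ + s₁*s₁*(1-y₂))*(1+y₂) + y₁*y₂) - 1
        = (s₀*s₀ + s₁*s₁*(1-y₂))*(1+y₂) + (y₂*(y₁-1) + (y₂-1)) := by ring
    rw [heq]
    refine add_mem (Ideal.mul_mem_right _ _ ?_) (add_mem (Ideal.mul_mem_left _ _ hy₁m) hy₂m)
    exact add_mem (Ideal.mul_mem_right _ _ hs₀m) (Ideal.mul_mem_left _ _ h1y)
  have hFm : (2*(v₀*(1+y₂)) - 1) - 3 ∈ mA := by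
    have heq : (2*(v₀*(1+y₂)) - 1) - 3 = 2*((1+y₂)*(v₀-1) + (y₂-1)) := by ring
    rw [heq]
    exact Ideal.mul_mem_left _ _ (add_mem (Ideal.mul_mem_left _ _ hv₀m) hy₂m)
  have hFnot : (2*(v₀*(1+y₂)) - 1) ∉ mA := by
    intro hF
    apply h3
    have heq : (3:A) = (2*(v₀*(1+y₂)) - 1) - ((2*(v₀*(1+y₂)) - 1) - 3) := by ring
    rw [heq]
    exact mA.sub_mem hF hFm
  have hFu : IsUnit (2*(v₀*(1+y₂)) - 1) := hu _ hFnot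
  have hs₀s₁ : s₀ * s₁ = 0 := by
    refine hFu.mul_left_cancel ?_
    rw [mul_zero]
    linear_combination hFeq
  have hs₀ : s₀ = 0 := by
    refine hs₁u.mul_left_cancel ?_
    rw [mul_zero]
    linear_combination hs₀s₁
  have hv₁0 : v₁ = 0 := by rw [hv₁def, hs₀]; ring
  have hv₀1 : v₀ = 1 := by
    refine hs₁u.mul_left_cancel ?_
    rw [mul_one]
    linear_combination hC2 - v₁ * hs₀
  have eqA : s₁*s₁*(1-y₂) + y₁ = 1 := by
    linear_combination -hA1 + (v₀+1)*hv₀1 + (v₁*(1-y₂))*hv₁0 - s₀*hs₀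
  have eqB : (s₀*s₀ + s₁*s₁*(1-y₂))*(1+y₂) + y₁*y₂ = 1 := by
    rw [← hv₀def, hv₀1]
  have eqB' : s₁*s₁*(1-y₂)*(1+y₂) + y₁*y₂ = 1 := by
    linear_combination eqB - ((1+y₂)*s₀)*hs₀
  linear_combination (1+y₂) * eqA - eqB'

theorem universality_y1_eq_y2 {A : Type*} [CommRing A] [IsLocalRing A] [IsArtinianRing A]
    (h5 : (5 : A) ∈ IsLocalRing.maximalIdeal A)
    (y₁ y₂ : A)
    (hy₁ : 1 + y₁ + y₁ ^ 2 + y₁ ^ 3 + y₁ ^ 4 = 0)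
    (hy₂ : 1 + y₂ + y₂ ^ 2 + y₂ ^ 3 + y₂ ^ 4 = 0)
    (hy₁m : y₁ - 1 ∈ IsLocalRing.maximalIdeal A)
    (hy₂m : y₂ - 1 ∈ IsLocalRing.maximalIdeal A)
    (u₁ u₂ σ₁ σ₂ g : PowerSeries A)
    (hu₁ : u₁ ^ 2 = X ^ 2 + C y₁)
    (hu₂ : u₂ ^ 2 = X ^ 2 + C y₂)
    (hu₁0 : constantCoeff u₁ - 1 ∈ IsLocalRing.maximalIdeal A)
    (hu₂0 : constantCoeff u₂ - 1 ∈ IsLocalRing.maximalIdeal A)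
    (hσ₁ : σ₁ * u₁ = X)
    (hσ₂ : σ₂ * u₂ = X)
    (hg0 : coeff 0 g ∈ IsLocalRing.maximalIdeal A)
    (hg1 : coeff 1 g - 1 ∈ IsLocalRing.maximalIdeal A)
    (hgn : ∀ n, 2 ≤ n → coeff n g ∈ IsLocalRing.maximalIdeal A)
    (hconj : pscomp σ₁ g = pscomp g σ₂) :
    y₁ = y₂ := by
  -- the maximal ideal is nilpotent
  obtain ⟨M, hM⟩ : IsNilpotent (IsLocalRing.maximalIdeal A) := by
    have h1 := IsArtinianRing.isNilpotent_jacobson_bot (R := A)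
    rwa [IsLocalRing.jacobson_eq_maximalIdeal ⊥ bot_ne_top] at h1
  have hu : ∀ a : A, a ∉ IsLocalRing.maximalIdeal A → IsUnit a :=
    fun a ha => IsLocalRing.notMem_maximalIdeal.mp ha
  have hone : (1:A) ∉ IsLocalRing.maximalIdeal A := by
    intro h
    exact (IsLocalRing.maximalIdeal.isMaximal A).ne_top ((Ideal.eq_top_iff_one _).mpr h)
  have h2 : (2:A) ∉ IsLocalRing.maximalIdeal A := by
    intro h
    apply hone
    have h4 : (4:A) ∈ IsLocalRing.maximalIdeal A := by
      have := (IsLocalRing.maximalIdeal A).mul_mem_left 2 h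
      rwa [show (2:A)*2 = 4 by norm_num] at this
    have := (IsLocalRing.maximalIdeal A).sub_mem h5 h4
    rwa [show (5:A) - 4 = 1 by norm_num] at this
  have h3 : (3:A) ∉ IsLocalRing.maximalIdeal A := by
    intro h
    apply hone
    have h6 : (6:A) ∈ IsLocalRing.maximalIdeal A := by
      have := (IsLocalRing.maximalIdeal A).mul_mem_left 2 h
      rwa [show (2:A)*3 = 6 by norm_num] at this
    have := (IsLocalRing.maximalIdeal A).sub_mem h6 h5
    rwa [show (6:A) - 5 = 1 by norm_num] at this
  have hy₂nil : IsNilpotent (y₂ - 1) := by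
    refine ⟨M, ?_⟩
    have h1 : (y₂-1) ^ M ∈ (IsLocalRing.maximalIdeal A) ^ M := Ideal.pow_mem_pow hy₂m M
    rw [hM] at h1
    simpa using h1
  -- the quadratic extension B
  haveI hBnt : Nontrivial (AdjoinRoot (Polynomial.X ^ 2 + Polynomial.C (y₂ - 1))) :=
    quad_nontrivial _
  have hx2 : AdjoinRoot.root (Polynomial.X ^ 2 + Polynomial.C (y₂ - 1))
        * AdjoinRoot.root (Polynomial.X ^ 2 + Polynomial.C (y₂ - 1))
      = 1 - algebraMap A (AdjoinRoot (Polynomial.X ^ 2 + Polynomial.C (y₂ - 1))) y₂ := by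
    rw [← pow_two, quad_root_sq (y₂ - 1), show -(y₂-1) = 1 - y₂ from by ring,
      map_sub (algebraMap A (AdjoinRoot (Polynomial.X ^ 2 + Polynomial.C (y₂ - 1)))) 1 y₂,
      map_one (algebraMap A (AdjoinRoot (Polynomial.X ^ 2 + Polynomial.C (y₂ - 1))))]
  have hxnil : IsNilpotent (AdjoinRoot.root (Polynomial.X ^ 2 + Polynomial.C (y₂ - 1))) :=
    quad_root_nilpotent _ hy₂nil
  have hinjB : ∀ a b a' b' : A,
      algebraMap A (AdjoinRoot (Polynomial.X ^ 2 + Polynomial.C (y₂ - 1))) a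
          + algebraMap A _ b * AdjoinRoot.root _
        = algebraMap A _ a' + algebraMap A _ b' * AdjoinRoot.root _
      → a = a' ∧ b = b' :=
    fun a b a' b' h => quad_inj _ h
  have hmemdec : ∀ z : AdjoinRoot (Polynomial.X ^ 2 + Polynomial.C (y₂ - 1)),
      z ∈ (IsLocalRing.maximalIdeal A).map
        (algebraMap A (AdjoinRoot (Polynomial.X ^ 2 + Polynomial.C (y₂ - 1))))
      → ∃ t₀ t₁ : A, z = algebraMap A _ t₀ + algebraMap A _ t₁ * AdjoinRoot.root _
          ∧ t₀ ∈ IsLocalRing.maximalIdeal A ∧ t₁ ∈ IsLocalRing.maximalIdeal A :=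
    fun z hz => ⟨(quadBasis _).repr z 0, (quadBasis _).repr z 1, quad_decomp _ z,
      quad_coord_mem _ hz 0, quad_coord_mem _ hz 1⟩
  -- the dual-numbers extension Cr of B
  have hεε : AdjoinRoot.root (Polynomial.X ^ 2 + Polynomial.C
        (0 : AdjoinRoot (Polynomial.X ^ 2 + Polynomial.C (y₂ - 1))))
      * AdjoinRoot.root (Polynomial.X ^ 2 + Polynomial.C
        (0 : AdjoinRoot (Polynomial.X ^ 2 + Polynomial.C (y₂ - 1)))) = 0 := by
    rw [← pow_two, quad_root_sq (0 : AdjoinRoot (Polynomial.X ^ 2 + Polynomial.C (y₂ - 1))),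
      neg_zero,
      map_zero (algebraMap (AdjoinRoot (Polynomial.X ^ 2 + Polynomial.C (y₂ - 1)))
        (AdjoinRoot (Polynomial.X ^ 2 + Polynomial.C
          (0 : AdjoinRoot (Polynomial.X ^ 2 + Polynomial.C (y₂ - 1))))))]
  have hinjC : ∀ a b a' b' : AdjoinRoot (Polynomial.X ^ 2 + Polynomial.C (y₂ - 1)),
      algebraMap _ (AdjoinRoot (Polynomial.X ^ 2 + Polynomial.C
          (0 : AdjoinRoot (Polynomial.X ^ 2 + Polynomial.C (y₂ - 1))))) a
          + algebraMap _ _ b * AdjoinRoot.root _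
        = algebraMap _ _ a' + algebraMap _ _ b' * AdjoinRoot.root _
      → a = a' ∧ b = b' :=
    fun a b a' b' h => quad_inj _ h
  have hdecC : ∀ z : AdjoinRoot (Polynomial.X ^ 2 + Polynomial.C
        (0 : AdjoinRoot (Polynomial.X ^ 2 + Polynomial.C (y₂ - 1)))),
      ∃ w₀ w₁ : AdjoinRoot (Polynomial.X ^ 2 + Polynomial.C (y₂ - 1)),
        z = algebraMap _ _ w₀ + algebraMap _ _ w₁ * AdjoinRoot.root _ :=
    fun z => ⟨(quadBasis _).repr z 0, (quadBasis _).repr z 1, quad_decomp _ z⟩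
  exact key_lemma (IsLocalRing.maximalIdeal A) hM hu h2 h3 y₁ y₂ hy₁m hy₂m
    u₁ u₂ σ₁ σ₂ g hu₁ hu₂ hu₂0 hσ₁ hσ₂ hg0 hg1 hgn hconj
    (algebraMap A _) (AdjoinRoot.root _) hx2 hxnil hinjB hmemdec
    (algebraMap _ _) (AdjoinRoot.root _) hεε hinjC hdecC
end

section
/- Under the setup, comparison of the coefficients of t on both sides of the identity σ₁ ∘ g = g ∘ σ₂ yields a₁·s⁻¹ − a₀²·a₁·s⁻³ = a₁·r⁻¹ (this is the paper's equation a₁/√(a₀² + y₁) − a₀²a₁/(a₀² + y₁)^{3/2} = a₁/√(y₂)). -/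
open PowerSeries

section Aux

open TrivSqZeroExt Polynomial

variable {A : Type*} [CommRing A]

lemma coeff_pscomp (f g : PowerSeries A) (n : ℕ) :
    coeff n (pscomp f g) = ∑ᶠ k : ℕ, (coeff k f) * (coeff n (g ^ k)) :=
  PowerSeries.coeff_mk _ _

lemma ps_coeff_zero_pow (g : PowerSeries A) (k : ℕ) :
    coeff 0 (g ^ k) = (constantCoeff g) ^ k := by
  simp [PowerSeries.coeff_zero_eq_constantCoeff, map_pow]

lemma eval₂_congr_of_pow_eq_zero {B : Type*} [CommRing B] (φ : A →+* B) {b : B} {N : ℕ}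
    (hb : b ^ N = 0) {P Q : Polynomial A} (h : ∀ k, k < N → P.coeff k = Q.coeff k) :
    P.eval₂ φ b = Q.eval₂ φ b := by
  set n := max (max P.natDegree Q.natDegree) N + 1 with hn
  have hP : P.natDegree < n := Nat.lt_succ_of_le ((le_max_left _ _).trans (le_max_left _ _))
  have hQ : Q.natDegree < n := Nat.lt_succ_of_le ((le_max_right _ _).trans (le_max_left _ _))
  rw [Polynomial.eval₂_eq_sum_range' φ hP b, Polynomial.eval₂_eq_sum_range' φ hQ b]
  apply Finset.sum_congr rfl
  intro k _
  by_cases hkN : k < N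
  · rw [h k hkN]
  · have hbk : b ^ k = 0 := by
      obtain ⟨j, rfl⟩ := Nat.exists_eq_add_of_le (not_lt.mp hkN)
      rw [pow_add, hb, zero_mul]
    rw [hbk, mul_zero, mul_zero]

lemma pow_eq_zero_of_le' {B : Type*} [CommRing B] {b : B} {N k : ℕ} (h : N ≤ k)
    (hb : b ^ N = 0) : b ^ k = 0 := by
  obtain ⟨j, rfl⟩ := Nat.exists_eq_add_of_le h
  rw [pow_add, hb, zero_mul]

lemma bridge (f h : PowerSeries A) {N : ℕ} (hN : (constantCoeff h) ^ N = 0) :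
    Polynomial.eval₂ (algebraMap A (DualNumber A))
      (inl (constantCoeff h) + (inr (coeff 1 h) : DualNumber A))
      (trunc (N + 1) f)
    = inl (coeff 0 (pscomp f h)) + (inr (coeff 1 (pscomp f h)) : DualNumber A) := by
  set c := constantCoeff h with hc
  set d := coeff 1 h with hd
  set b : DualNumber A := inl c + inr d with hb
  have hbf : fst b = c := by simp [hb]
  have hbs : snd b = d := by simp [hb]
  rw [Polynomial.eval₂_eq_sum_range' _ (natDegree_trunc_lt f N) b]
  have hcoeff : ∀ i ∈ Finset.range (N + 1), (trunc (N + 1) f).coeff i = coeff i f := by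
    intro i hi
    rw [coeff_trunc]
    simp [Finset.mem_range.mp hi]
  apply TrivSqZeroExt.ext
  · rw [fst_sum, fst_add, fst_inl, fst_inr, add_zero, coeff_pscomp]
    rw [finsum_eq_sum_of_support_subset _ (s := Finset.range (N + 1)) ?side]
    case side =>
      intro k hk
      simp only [Function.mem_support, ne_eq] at hk
      by_contra hmem
      apply hk
      have hkN : N + 1 ≤ k := by
        simpa [Finset.mem_range, not_lt] using hmem
      rw [ps_coeff_zero_pow, ← hc, pow_eq_zero_of_le' (Nat.le_of_succ_le hkN) hN, mul_zero]
    apply Finset.sum_congr rfl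
    intro i hi
    rw [hcoeff i hi, TrivSqZeroExt.algebraMap_eq_inl, fst_mul, fst_inl, fst_pow, hbf,
      ps_coeff_zero_pow, ← hc]
  · rw [snd_sum, snd_add, snd_inl, snd_inr, zero_add, coeff_pscomp]
    rw [finsum_eq_sum_of_support_subset _ (s := Finset.range (N + 1)) ?side2]
    case side2 =>
      intro k hk
      simp only [Function.mem_support, ne_eq] at hk
      by_contra hmem
      apply hk
      have hkN : N + 1 ≤ k := by
        simpa [Finset.mem_range, not_lt] using hmem
      have hz : c ^ (k - 1) = 0 := pow_eq_zero_of_le' (by omega) hN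
      rw [PowerSeries.coeff_one_pow, ← hc, hz, mul_zero, mul_zero]
    apply Finset.sum_congr rfl
    intro i hi
    rw [hcoeff i hi, TrivSqZeroExt.algebraMap_eq_inl, snd_mul, snd_inl, snd_pow, hbf, hbs,
      fst_inl, PowerSeries.coeff_one_pow, ← hc, ← hd]
    simp only [smul_eq_mul, op_smul_eq_smul, MulOpposite.op_zero, zero_smul, zero_mul, add_zero,
      smul_zero, nsmul_eq_mul, Nat.pred_eq_sub_one]
    ring

end Aux

open TrivSqZeroExt

theorem linear_coefficient_comparison {A : Type*} [CommRing A] [IsLocalRing A] [IsArtinianRing A]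
    (h5 : (5 : A) ∈ IsLocalRing.maximalIdeal A)
    (y₁ y₂ : A)
    (hy₁ : 1 + y₁ + y₁ ^ 2 + y₁ ^ 3 + y₁ ^ 4 = 0)
    (hy₂ : 1 + y₂ + y₂ ^ 2 + y₂ ^ 3 + y₂ ^ 4 = 0)
    (hy₁m : y₁ - 1 ∈ IsLocalRing.maximalIdeal A)
    (hy₂m : y₂ - 1 ∈ IsLocalRing.maximalIdeal A)
    (u₁ u₂ σ₁ σ₂ g : PowerSeries A)
    (hu₁ : u₁ ^ 2 = X ^ 2 + C y₁)
    (hu₂ : u₂ ^ 2 = X ^ 2 + C y₂)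
    (hu₁0 : constantCoeff u₁ - 1 ∈ IsLocalRing.maximalIdeal A)
    (hu₂0 : constantCoeff u₂ - 1 ∈ IsLocalRing.maximalIdeal A)
    (hσ₁ : σ₁ * u₁ = X)
    (hσ₂ : σ₂ * u₂ = X)
    (hg0 : coeff 0 g ∈ IsLocalRing.maximalIdeal A)
    (hg1 : coeff 1 g - 1 ∈ IsLocalRing.maximalIdeal A)
    (hgn : ∀ n, 2 ≤ n → coeff n g ∈ IsLocalRing.maximalIdeal A)
    (hconj : pscomp σ₁ g = pscomp g σ₂) :
    coeff 1 g * Ring.inverse (constantCoeff (pscomp u₁ g))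
      - (coeff 0 g) ^ 2 * coeff 1 g * (Ring.inverse (constantCoeff (pscomp u₁ g))) ^ 3
      = coeff 1 g * Ring.inverse (constantCoeff u₂) := by
  classical
  set m := IsLocalRing.maximalIdeal A with hm
  have hmne : m ≠ ⊤ := (IsLocalRing.maximalIdeal.isMaximal A).ne_top
  have hone : (1 : A) ∉ m := fun h1 => hmne ((Ideal.eq_top_iff_one m).mpr h1)
  set a₀ := coeff 0 g with ha₀
  set a₁ := coeff 1 g with ha₁
  obtain ⟨n, hn⟩ : IsNilpotent m := by
    have := IsArtinianRing.isNilpotent_jacobson_bot (R := A)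
    rwa [IsLocalRing.jacobson_eq_maximalIdeal (⊥ : Ideal A) bot_ne_top] at this
  have hN : a₀ ^ (n + 1) = 0 := by
    have h1 : a₀ ^ n ∈ m ^ n := Ideal.pow_mem_pow hg0 n
    rw [hn] at h1
    have h2 : a₀ ^ n = 0 := by simpa using h1
    rw [pow_succ, h2, zero_mul]
  set N := n + 1 with hNdef
  set b : DualNumber A := inl a₀ + inr a₁ with hb
  have hbf : fst b = a₀ := by simp [hb]
  have hbs : snd b = a₁ := by simp [hb]
  have hbM : b ^ (N + 1) = 0 := by
    have hfst : fst (b ^ (N + 1)) = 0 := by rw [fst_pow, hbf, pow_succ, hN, zero_mul]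
    have hsnd : snd (b ^ (N + 1)) = 0 := by
      rw [snd_pow, hbf, hbs, Nat.pred_succ, hN]
      simp
    exact TrivSqZeroExt.ext (by rw [hfst, TrivSqZeroExt.fst_zero])
      (by rw [hsnd, TrivSqZeroExt.snd_zero])
  set Ψ : PowerSeries A → DualNumber A :=
    fun f => Polynomial.eval₂ (algebraMap A (DualNumber A)) b (trunc (N + 1) f) with hΨ
  have hmul : ∀ f₁ f₂ : PowerSeries A, Ψ (f₁ * f₂) = Ψ f₁ * Ψ f₂ := by
    intro f₁ f₂
    rw [hΨ]
    simp only
    rw [← Polynomial.eval₂_mul]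
    apply eval₂_congr_of_pow_eq_zero _ hbM
    intro k hk
    rw [coeff_trunc]
    simp only [hk, if_pos]
    rw [PowerSeries.coeff_mul_eq_coeff_trunc_mul_trunc f₁ f₂ (n := N + 1) hk,
      ← Polynomial.coe_mul, Polynomial.coeff_coe]
  have hΨX : Ψ X = b := by
    rw [hΨ]; simp only
    rw [trunc_X_of (by omega), Polynomial.eval₂_X]
  have hΨC : ∀ y : A, Ψ (C y) = inl y := by
    intro y
    rw [hΨ]; simp only
    rw [trunc_C, Polynomial.eval₂_C, TrivSqZeroExt.algebraMap_eq_inl']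
    simp
  have hΨadd : ∀ f₁ f₂ : PowerSeries A, Ψ (f₁ + f₂) = Ψ f₁ + Ψ f₂ := by
    intro f₁ f₂
    rw [hΨ]; simp only
    rw [map_add, Polynomial.eval₂_add]
  set c₀ := coeff 0 (pscomp σ₁ g) with hc₀
  set c₁ := coeff 1 (pscomp σ₁ g) with hc₁
  set s₀ := coeff 0 (pscomp u₁ g) with hs₀
  set w₁ := coeff 1 (pscomp u₁ g) with hw₁
  have hcc : constantCoeff g = a₀ := (PowerSeries.coeff_zero_eq_constantCoeff_apply g).symm
  have hN' : (constantCoeff g) ^ N = 0 := by rw [hcc]; exact hN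
  have hΨσ₁ : Ψ σ₁ = inl c₀ + inr c₁ := by
    have h := bridge σ₁ g hN'
    rw [hcc] at h
    exact h
  have hΨu₁ : Ψ u₁ = inl s₀ + inr w₁ := by
    have h := bridge u₁ g hN'
    rw [hcc] at h
    exact h
  have E1 : (inl c₀ + (inr c₁ : DualNumber A)) * (inl s₀ + inr w₁) = b := by
    rw [← hΨσ₁, ← hΨu₁, ← hmul, hσ₁, hΨX]
  have eq1 : c₀ * s₀ = a₀ := by
    have h := congrArg fst E1
    simp only [TrivSqZeroExt.fst_mul, TrivSqZeroExt.fst_add, fst_inl, fst_inr, add_zero,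
      zero_add, hbf] at h
    linear_combination h
  have eq2 : c₀ * w₁ + s₀ * c₁ = a₁ := by
    have h := congrArg snd E1
    simp only [TrivSqZeroExt.snd_mul, TrivSqZeroExt.fst_add, TrivSqZeroExt.snd_add, fst_inl,
      snd_inl, fst_inr, snd_inr, smul_eq_mul, op_smul_eq_smul, add_zero, zero_add, mul_zero,
      zero_mul, hbs] at h
    linear_combination h
  have E2 : (inl s₀ + (inr w₁ : DualNumber A)) * (inl s₀ + inr w₁) = b * b + inl y₁ := by
    have h := congrArg Ψ hu₁
    rw [sq, hmul, hΨu₁] at h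
    rw [h, hΨadd, hΨC, show (X : PowerSeries A) ^ 2 = X * X from sq X, hmul, hΨX]
  have fstE2 : s₀ * s₀ = a₀ * a₀ + y₁ := by
    have h := congrArg fst E2
    simp only [TrivSqZeroExt.fst_mul, TrivSqZeroExt.fst_add, fst_inl, fst_inr, add_zero,
      zero_add, hbf] at h
    linear_combination h
  have sndE2 : s₀ * w₁ + s₀ * w₁ = a₀ * a₁ + a₀ * a₁ := by
    have h := congrArg snd E2
    simp only [TrivSqZeroExt.snd_mul, TrivSqZeroExt.fst_add, TrivSqZeroExt.snd_add, fst_inl,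
      snd_inl, fst_inr, snd_inr, smul_eq_mul, op_smul_eq_smul, add_zero, zero_add, mul_zero,
      zero_mul, hbf, hbs] at h
    linear_combination h
  -- units
  set r := constantCoeff u₂ with hr
  have hru : IsUnit r := by
    rw [← IsLocalRing.notMem_maximalIdeal]
    intro hrm
    exact hone (by simpa using m.sub_mem hrm hu₂0)
  have h2u : IsUnit (2 : A) := by
    rw [← IsLocalRing.notMem_maximalIdeal]
    intro h2m
    have h4 : (2 : A) * 2 ∈ m := m.mul_mem_left 2 h2m
    have : (5 : A) - 2 * 2 ∈ m := m.sub_mem h5 h4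
    norm_num at this
    exact hone this
  have hsu : IsUnit s₀ := by
    rw [← IsLocalRing.notMem_maximalIdeal]
    intro hsm
    have hy : y₁ ∈ m := by
      have : s₀ * s₀ - a₀ * a₀ ∈ m := m.sub_mem (m.mul_mem_left s₀ hsm) (m.mul_mem_left a₀ hg0)
      rw [fstE2] at this
      simpa using this
    exact hone (by simpa using m.sub_mem hy hy₁m)
  have eq3 : s₀ * w₁ = a₀ * a₁ := by
    apply h2u.mul_left_cancel
    linear_combination sndE2
  -- the σ₂ side
  have hri := Ring.mul_inverse_cancel r hru
  have hσ₂0 : constantCoeff σ₂ = 0 := by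
    have h0 := congrArg (constantCoeff) hσ₂
    rw [map_mul, constantCoeff_X] at h0
    calc constantCoeff σ₂ = constantCoeff σ₂ * (r * Ring.inverse r) := by rw [hri, mul_one]
      _ = constantCoeff σ₂ * r * Ring.inverse r := by ring
      _ = 0 := by rw [h0, zero_mul]
  have hσ₂1 : coeff 1 σ₂ * r = 1 := by
    have h1 := congrArg (coeff 1) hσ₂
    rw [PowerSeries.coeff_one_mul, coeff_one_X, hσ₂0, mul_zero, add_zero] at h1
    exact h1
  have hps2 : coeff 1 (pscomp g σ₂) = a₁ * coeff 1 σ₂ := by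
    rw [coeff_pscomp]
    rw [finsum_eq_single _ 1 ?hz]
    · rw [pow_one, ← ha₁]
    case hz =>
      intro k hk
      rw [PowerSeries.coeff_one_pow, hσ₂0]
      match k, hk with
      | 0, _ => simp
      | (j + 2), _ =>
          rw [zero_pow (by omega : j + 2 - 1 ≠ 0)]
          ring
  have hconj1 : c₁ = a₁ * coeff 1 σ₂ := by
    rw [hc₁, hconj, hps2]
  have hsi := Ring.mul_inverse_cancel s₀ hsu
  have ht : coeff 1 σ₂ = Ring.inverse r := by
    rw [← mul_one (coeff 1 σ₂), ← hri, ← mul_assoc, hσ₂1, one_mul]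
  have key : c₁ * s₀ ^ 3 = a₁ * s₀ ^ 2 - a₀ ^ 2 * a₁ := by
    linear_combination s₀ ^ 2 * eq2 - w₁ * s₀ * eq1 - a₀ * eq3
  rw [show constantCoeff (pscomp u₁ g) = s₀ from (PowerSeries.coeff_zero_eq_constantCoeff_apply _).symm]
  rw [← ht, ← hconj1]
  linear_combination (-(Ring.inverse s₀ ^ 3)) * key +
    (c₁ * (s₀ ^ 2 * Ring.inverse s₀ ^ 2 + s₀ * Ring.inverse s₀ + 1)
      - a₁ * Ring.inverse s₀ * (s₀ * Ring.inverse s₀ + 1)) * hsi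
end

section
/- Let A be a commutative local ring with maximal ideal m in which 2 and 3 are invertible. Let a₀ ∈ m, let a₁, s, r be units of A, and let a₂, y₁, y₂ ∈ A. Assume: (i) s² = a₀² + y₁; (ii) r² = y₂; (iii) a₀·s = a₀; (iv) a₁·s⁻¹ − a₀²·a₁·s⁻³ = a₁·r⁻¹; and (v) a₂·r⁻¹·(r⁻¹ − 1) = (3/2)·(a₀² − 1)·a₀·a₁² (with 3/2 = 3·2⁻¹). Then y₁ = y₂. -/
theorem ring_theoretic_core {A : Type*} [CommRing A] [IsLocalRing A]
    (h2 : IsUnit (2 : A)) (h3 : IsUnit (3 : A))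
    (a₀ : A) (ha₀ : a₀ ∈ IsLocalRing.maximalIdeal A)
    (a₁ s r : Aˣ) (a₂ y₁ y₂ : A)
    (hs : (s : A) ^ 2 = a₀ ^ 2 + y₁)
    (hr : (r : A) ^ 2 = y₂)
    (hiii : a₀ * s = a₀)
    (hiv : (a₁ : A) * (↑s⁻¹ : A) - a₀ ^ 2 * (a₁ : A) * (↑s⁻¹ : A) ^ 3 = (a₁ : A) * (↑r⁻¹ : A))
    (hv : a₂ * (↑r⁻¹ : A) * ((↑r⁻¹ : A) - 1)
      = 3 * Ring.inverse (2 : A) * (a₀ ^ 2 - 1) * a₀ * (a₁ : A) ^ 2) :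
    y₁ = y₂ := by
  -- a₀ * s⁻¹ = a₀
  have hs1 : a₀ * (↑s⁻¹ : A) = a₀ := by
    have := congrArg (· * (↑s⁻¹ : A)) hiii
    simpa [mul_assoc, Units.mul_inv] using this.symm
  -- cancel a₁ in (iv)
  have h4 : (↑s⁻¹ : A) - a₀ ^ 2 * (↑s⁻¹ : A) ^ 3 = (↑r⁻¹ : A) := by
    have := congrArg (· * (↑a₁⁻¹ : A)) hiv
    simp only [sub_mul] at this
    calc (↑s⁻¹ : A) - a₀ ^ 2 * (↑s⁻¹ : A) ^ 3
        = (↑a₁ : A) * ↑s⁻¹ * ↑a₁⁻¹ - a₀ ^ 2 * ↑a₁ * (↑s⁻¹:A) ^ 3 * ↑a₁⁻¹ := by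
          linear_combination (-(↑s⁻¹ : A) + a₀ ^ 2 * (↑s⁻¹ : A) ^ 3) * (Units.mul_inv a₁)
      _ = (↑a₁ : A) * ↑r⁻¹ * ↑a₁⁻¹ := this
      _ = ↑r⁻¹ := by linear_combination (↑r⁻¹ : A) * (Units.mul_inv a₁)
  have habs : a₀ ^ 2 * (↑s⁻¹ : A) ^ 3 = a₀ ^ 2 := by
    have h1 : a₀ ^ 2 * (↑s⁻¹ : A) ^ 3 = (a₀ * ↑s⁻¹) * (a₀ * ↑s⁻¹) * ↑s⁻¹ := by ring
    rw [h1, hs1]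
    have : a₀ * a₀ * (↑s⁻¹ : A) = a₀ * (a₀ * ↑s⁻¹) := by ring
    rw [this, hs1]; ring
  rw [habs] at h4
  -- h4 : ↑s⁻¹ - a₀ ^ 2 = ↑r⁻¹
  -- a₀ * (1 - r⁻¹) = a₀ ^ 3
  have h5 : a₀ * (1 - (↑r⁻¹ : A)) = a₀ ^ 3 := by
    have := congrArg (a₀ * ·) h4
    simp only [mul_sub] at this
    rw [hs1] at this
    linear_combination this
  -- a₀ = c * (r⁻¹ - 1)
  have hu1 : IsUnit (a₀ ^ 2 - 1 : A) := by
    have : a₀ ^ 2 ∈ IsLocalRing.maximalIdeal A := by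
      rw [pow_two]; exact Ideal.mul_mem_left _ _ ha₀
    have h := IsLocalRing.isUnit_one_sub_self_of_mem_nonunits _
      ((IsLocalRing.mem_maximalIdeal _).mp this)
    simpa using h.neg
  have h2' : IsUnit (Ring.inverse (2 : A)) :=
    IsUnit.of_mul_eq_one 2 (Ring.inverse_mul_cancel 2 h2)
  have hw : IsUnit (3 * Ring.inverse (2 : A) * (a₀ ^ 2 - 1) * (↑a₁ : A) ^ 2) :=
    ((h3.mul h2').mul hu1).mul (a₁.isUnit.pow 2)
  obtain ⟨u, hu⟩ := hw
  have hv2 : a₂ * (↑r⁻¹ : A) * ((↑r⁻¹ : A) - 1) = (↑u : A) * a₀ := by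
    rw [hu]; linear_combination hv
  clear hv
  have hv := hv2
  have ha : a₀ = (↑u⁻¹ : A) * (a₂ * ↑r⁻¹) * ((↑r⁻¹ : A) - 1) := by
    have := congrArg ((↑u⁻¹ : A) * ·) hv
    simp only [← mul_assoc, Units.inv_mul, one_mul] at this
    rw [← this]; ring
  set c : A := (↑u⁻¹ : A) * (a₂ * ↑r⁻¹) with hc
  -- a₀ ^ 2 = -c * a₀ ^ 3
  have hsq : a₀ ^ 2 = -c * a₀ ^ 3 := by
    calc a₀ ^ 2 = a₀ * a₀ := by ring
      _ = (c * ((↑r⁻¹ : A) - 1)) * a₀ := by rw [← ha]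
      _ = -c * (a₀ * (1 - (↑r⁻¹ : A))) := by ring
      _ = -c * a₀ ^ 3 := by rw [h5]
  -- 1 + c * a₀ is a unit
  have hca : -(c * a₀) ∈ IsLocalRing.maximalIdeal A := by
    exact neg_mem (Ideal.mul_mem_left _ _ ha₀)
  have hunit : IsUnit (1 + c * a₀) := by
    have h := IsLocalRing.isUnit_one_sub_self_of_mem_nonunits _
      ((IsLocalRing.mem_maximalIdeal _).mp hca)
    simpa [sub_neg_eq_add] using h
  have hzero : a₀ ^ 2 * (1 + c * a₀) = 0 := by linear_combination hsq
  obtain ⟨v, hv'⟩ := hunit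
  rw [← hv'] at hzero
  have ha0sq : a₀ ^ 2 = 0 := by
    have := congrArg (· * (↑v⁻¹ : A)) hzero
    simpa [mul_assoc, Units.mul_inv] using this
  -- s⁻¹ = r⁻¹, hence s = r
  have hsr : (↑s⁻¹ : A) = (↑r⁻¹ : A) := by rw [← h4, ha0sq]; ring
  have hsr' : s = r := by
    have : s⁻¹ = r⁻¹ := Units.ext hsr
    simpa using congrArg (·⁻¹) this
  have : y₁ = (s : A) ^ 2 - a₀ ^ 2 := by rw [hs]; ring
  rw [this, ha0sq, hsr', hr]; ring
end
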